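/- arXiv:1811.05893 — 4 statements merged into one kernel-verified Lean document; each statement's English description precedes it below -/
import Mathlib

section
/- Let A ∈ ℂ^{n×n}, B ∈ ℂ^{n×m}, C ∈ ℂ^{p×n}, D ∈ ℂ^{p×m}, and let K ∈ ℂ^{m×n} be such that iω ∈ ρ(A) ∩ ρ(A+BK) for a real ω. Then the matrix P_K(iω) = (C+DK)(iω - A - BK)⁻¹B + D is surjective if and only if P(iω) = C(iω - A)⁻¹B + D is surjective. -/
open Matrix Complex

/-- With `iω ∈ ρ(A) ∩ ρ(A+BK)`, the transfer function value
`P_K(iω) = (C+DK)(iω - A - BK)⁻¹B + D` is surjective iff `P(iω) = C(iω - A)⁻¹B + D` is. -/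
theorem stmt_2 {n m p : ℕ}
    (A : Matrix (Fin n) (Fin n) ℂ) (B : Matrix (Fin n) (Fin m) ℂ)
    (C : Matrix (Fin p) (Fin n) ℂ) (D : Matrix (Fin p) (Fin m) ℂ)
    (K : Matrix (Fin m) (Fin n) ℂ) (ω : ℝ)
    (h₁ : IsUnit ((Complex.I * ω) • (1 : Matrix (Fin n) (Fin n) ℂ) - A))
    (h₂ : IsUnit ((Complex.I * ω) • (1 : Matrix (Fin n) (Fin n) ℂ) - (A + B * K))) :
    Function.Surjective
        (((C + D * K) * ((Complex.I * ω) • (1 : Matrix (Fin n) (Fin n) ℂ) - (A + B * K))⁻¹ * B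
          + D).mulVecLin)
      ↔ Function.Surjective
        ((C * ((Complex.I * ω) • (1 : Matrix (Fin n) (Fin n) ℂ) - A)⁻¹ * B + D).mulVecLin) := by
  set E₁ : Matrix (Fin n) (Fin n) ℂ := (Complex.I * ω) • 1 - A with hE₁
  set E₂ : Matrix (Fin n) (Fin n) ℂ := (Complex.I * ω) • 1 - (A + B * K) with hE₂
  have hd1 : IsUnit E₁.det := (isUnit_iff_isUnit_det _).mp h₁
  have hd2 : IsUnit E₂.det := (isUnit_iff_isUnit_det _).mp h₂
  have hinv1 : E₁⁻¹ * E₁ = 1 := nonsing_inv_mul _ hd1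
  have hinv2 : E₂ * E₂⁻¹ = 1 := mul_nonsing_inv _ hd2
  have hsplit : E₁ = E₂ + B * K := by rw [hE₁, hE₂]; abel
  -- resolvent identity
  have key : E₂⁻¹ = E₁⁻¹ + E₁⁻¹ * B * K * E₂⁻¹ := by
    have h : E₁ * E₂⁻¹ = 1 + B * K * E₂⁻¹ := by
      rw [hsplit, add_mul, hinv2]
    calc E₂⁻¹ = E₁⁻¹ * (E₁ * E₂⁻¹) := by rw [← mul_assoc, hinv1, one_mul]
    _ = E₁⁻¹ + E₁⁻¹ * B * K * E₂⁻¹ := by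
        rw [h, mul_add, mul_one]
        simp [Matrix.mul_assoc]
  -- factorization P_K = P * (1 + K E₂⁻¹ B)
  have hfact : (C + D * K) * E₂⁻¹ * B + D
      = (C * E₁⁻¹ * B + D) * (1 + K * E₂⁻¹ * B) := by
    calc (C + D * K) * E₂⁻¹ * B + D
        = C * E₂⁻¹ * B + D * K * E₂⁻¹ * B + D := by
          simp only [Matrix.add_mul]
    _ = C * (E₁⁻¹ + E₁⁻¹ * B * K * E₂⁻¹) * B + D * K * E₂⁻¹ * B + D := by rw [← key]
    _ = (C * E₁⁻¹ * B + D) * (1 + K * E₂⁻¹ * B) := by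
          simp only [Matrix.add_mul, Matrix.mul_add, Matrix.mul_one, Matrix.mul_assoc]
          abel
  -- the factor is invertible (left inverse 1 - K E₁⁻¹ B)
  have hmul : (1 - K * E₁⁻¹ * B) * (1 + K * E₂⁻¹ * B) = 1 := by
    have h1 : K * E₂⁻¹ * B = K * E₁⁻¹ * B + K * E₁⁻¹ * B * (K * E₂⁻¹ * B) := by
      calc K * E₂⁻¹ * B = K * (E₁⁻¹ + E₁⁻¹ * B * K * E₂⁻¹) * B := by rw [← key]
      _ = K * E₁⁻¹ * B + K * E₁⁻¹ * B * (K * E₂⁻¹ * B) := by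
          simp only [Matrix.mul_add, Matrix.add_mul, Matrix.mul_assoc]
    calc (1 - K * E₁⁻¹ * B) * (1 + K * E₂⁻¹ * B)
        = 1 + K * E₂⁻¹ * B - (K * E₁⁻¹ * B + K * E₁⁻¹ * B * (K * E₂⁻¹ * B)) := by
          simp only [Matrix.sub_mul, Matrix.mul_add, Matrix.one_mul, Matrix.mul_one]
          abel
    _ = 1 := by rw [← h1]; abel
  have hmul2 : (1 + K * E₂⁻¹ * B) * (1 - K * E₁⁻¹ * B) = 1 :=
    mul_eq_one_comm.mp hmul
  -- surjectivity transfer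
  have hMsurj : Function.Surjective (1 + K * E₂⁻¹ * B).mulVecLin := by
    intro y
    refine ⟨(1 - K * E₁⁻¹ * B).mulVec y, ?_⟩
    rw [Matrix.mulVecLin_apply, Matrix.mulVec_mulVec, hmul2, Matrix.one_mulVec]
  rw [hfact, Matrix.mulVecLin_mul, LinearMap.coe_comp]
  exact ⟨fun h => h.of_comp, fun h => h.comp hMsurj⟩
end

section
/- Let A ∈ ℂ^{n×n}, B ∈ ℂ^{n×m}, C ∈ ℂ^{p×n}, and L, L̃ ∈ ℂ^{n×p} be such that iω ∈ ρ(A+LC) ∩ ρ(A+L̃C) for some real ω, and set P_L(iω) = C(iω - A - LC)⁻¹(B+LD) + D and similarly P_{L̃}. Then the matrix I - C(iω - A - LC)⁻¹(L̃-L) is invertible and P_{L̃}(iω) = (I - C(iω - A - LC)⁻¹(L̃-L))⁻¹ P_L(iω). -/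
open Matrix

/-- For two output injections `L`, `L̃` with `iω ∈ ρ(A+LC) ∩ ρ(A+L̃C)`,
the matrix `I - C(iω - A - LC)⁻¹(L̃-L)` is invertible and
`P_{L̃}(iω) = (I - C(iω - A - LC)⁻¹(L̃-L))⁻¹ P_L(iω)`. -/
theorem stmt_3 {n m p : ℕ}
    (A : Matrix (Fin n) (Fin n) ℂ) (B : Matrix (Fin n) (Fin m) ℂ)
    (C : Matrix (Fin p) (Fin n) ℂ) (D : Matrix (Fin p) (Fin m) ℂ)
    (L Lt : Matrix (Fin n) (Fin p) ℂ) (ω : ℝ)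
    (hL : IsUnit ((Complex.I * ω) • (1 : Matrix (Fin n) (Fin n) ℂ) - (A + L * C)))
    (hLt : IsUnit ((Complex.I * ω) • (1 : Matrix (Fin n) (Fin n) ℂ) - (A + Lt * C))) :
    IsUnit ((1 : Matrix (Fin p) (Fin p) ℂ)
        - C * ((Complex.I * ω) • (1 : Matrix (Fin n) (Fin n) ℂ) - (A + L * C))⁻¹ * (Lt - L))
    ∧ C * ((Complex.I * ω) • (1 : Matrix (Fin n) (Fin n) ℂ) - (A + Lt * C))⁻¹ * (B + Lt * D) + D
      = ((1 : Matrix (Fin p) (Fin p) ℂ)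
          - C * ((Complex.I * ω) • (1 : Matrix (Fin n) (Fin n) ℂ) - (A + L * C))⁻¹ * (Lt - L))⁻¹
        * (C * ((Complex.I * ω) • (1 : Matrix (Fin n) (Fin n) ℂ) - (A + L * C))⁻¹ * (B + L * D)
            + D) := by
  set M : Matrix (Fin n) (Fin n) ℂ :=
    (Complex.I * ω) • (1 : Matrix (Fin n) (Fin n) ℂ) - (A + L * C) with hMdef
  set Mt : Matrix (Fin n) (Fin n) ℂ :=
    (Complex.I * ω) • (1 : Matrix (Fin n) (Fin n) ℂ) - (A + Lt * C) with hMtdef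
  have hMd : IsUnit M.det := (Matrix.isUnit_iff_isUnit_det M).mp hL
  have hMtd : IsUnit Mt.det := (Matrix.isUnit_iff_isUnit_det Mt).mp hLt
  have hMM : M⁻¹ * M = 1 := Matrix.nonsing_inv_mul M hMd
  have hMtMt : Mt * Mt⁻¹ = 1 := Matrix.mul_nonsing_inv Mt hMtd
  have hEC : (Lt - L) * C = M - Mt := by
    rw [Matrix.sub_mul, hMdef, hMtdef]; abel
  set X : Matrix (Fin p) (Fin p) ℂ := 1 - C * M⁻¹ * (Lt - L) with hXdef
  have h1 : M⁻¹ * Mt = 1 - M⁻¹ * (Lt - L) * C := by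
    have h : Mt = M - (Lt - L) * C := by rw [hEC]; abel
    rw [h, Matrix.mul_sub, hMM, Matrix.mul_assoc]
  have hXunit : IsUnit X := by
    rw [Matrix.isUnit_iff_isUnit_det]
    have hdet : X.det = (M⁻¹ * Mt).det := by
      rw [h1]
      have h : X = 1 + C * -(M⁻¹ * (Lt - L)) := by
        rw [hXdef, Matrix.mul_neg, ← Matrix.mul_assoc, ← sub_eq_add_neg]
      rw [h, Matrix.det_one_add_mul_comm]
      congr 1
      rw [Matrix.neg_mul, Matrix.mul_assoc, ← sub_eq_add_neg]
    rw [hdet, Matrix.det_mul]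
    exact (Matrix.isUnit_nonsing_inv_det M hMd).mul hMtd
  have h3 : M⁻¹ * ((Lt - L) * C) * Mt⁻¹ = Mt⁻¹ - M⁻¹ := by
    rw [hEC, Matrix.mul_sub, hMM, Matrix.sub_mul, Matrix.one_mul, Matrix.mul_assoc, hMtMt,
      Matrix.mul_one]
  have h2 : ∀ Y : Matrix (Fin n) (Fin m) ℂ,
      C * M⁻¹ * (Lt - L) * (C * Mt⁻¹ * Y) = C * Mt⁻¹ * Y - C * M⁻¹ * Y := by
    intro Y
    calc C * M⁻¹ * (Lt - L) * (C * Mt⁻¹ * Y)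
        = C * ((M⁻¹ * ((Lt - L) * C) * Mt⁻¹) * Y) := by simp only [Matrix.mul_assoc]
      _ = C * ((Mt⁻¹ - M⁻¹) * Y) := by rw [h3]
      _ = C * Mt⁻¹ * Y - C * M⁻¹ * Y := by
          rw [Matrix.sub_mul, Matrix.mul_sub, ← Matrix.mul_assoc, ← Matrix.mul_assoc]
  have heq : X * (C * Mt⁻¹ * (B + Lt * D) + D) = C * M⁻¹ * (B + L * D) + D := by
    calc X * (C * Mt⁻¹ * (B + Lt * D) + D)
        = (C * Mt⁻¹ * (B + Lt * D) + D) - (C * M⁻¹ * (Lt - L) * (C * Mt⁻¹ * (B + Lt * D))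
            + C * M⁻¹ * (Lt - L) * D) := by
          rw [hXdef, Matrix.sub_mul, Matrix.one_mul,
            Matrix.mul_add (C * M⁻¹ * (Lt - L)) (C * Mt⁻¹ * (B + Lt * D)) D]
      _ = (C * Mt⁻¹ * (B + Lt * D) + D) - ((C * Mt⁻¹ * (B + Lt * D) - C * M⁻¹ * (B + Lt * D))
            + C * M⁻¹ * ((Lt - L) * D)) := by
          rw [h2 (B + Lt * D), Matrix.mul_assoc (C * M⁻¹) (Lt - L) D]
      _ = C * M⁻¹ * (B + Lt * D) - C * M⁻¹ * ((Lt - L) * D) + D := by abel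
      _ = C * M⁻¹ * ((B + Lt * D) - (Lt - L) * D) + D := by rw [Matrix.mul_sub]
      _ = C * M⁻¹ * (B + L * D) + D := by
          congr 2
          rw [Matrix.sub_mul]; abel
  refine ⟨hXunit, ?_⟩
  have hXd := (Matrix.isUnit_iff_isUnit_det X).mp hXunit
  calc C * Mt⁻¹ * (B + Lt * D) + D
      = X⁻¹ * (X * (C * Mt⁻¹ * (B + Lt * D) + D)) := by
        rw [← Matrix.mul_assoc, Matrix.nonsing_inv_mul X hXd, Matrix.one_mul]
    _ = X⁻¹ * (C * M⁻¹ * (B + L * D) + D) := by rw [heq]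
end

section
/- Suppose K = [K₁, K₂] is such that the block matrix [[G₁, G₂C],[0, A]] + [[G₂D],[B]]·[K₁, K₂] is Hurwitz (all eigenvalues have negative real part), where G₁ has only purely imaginary eigenvalues ±iω_k. Then the pair (K₁, G₁) is observable. -/
open Matrix

/-- A square complex matrix is Hurwitz if all its eigenvalues have negative real part. -/
def Hurwitz {ι : Type*} [Fintype ι] [DecidableEq ι] (M : Matrix ι ι ℂ) : Prop :=
  ∀ μ ∈ spectrum ℂ M, μ.re < 0

lemma mem_spectrum_of_mulVec_eq {ι : Type*} [Fintype ι] [DecidableEq ι]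
    (M : Matrix ι ι ℂ) (μ : ℂ) (v : ι → ℂ) (hv : v ≠ 0) (h : M.mulVec v = μ • v) :
    μ ∈ spectrum ℂ M := by
  rw [← AlgEquiv.spectrum_eq (Matrix.toLinAlgEquiv' (R := ℂ) (n := ι)),
    ← Module.End.hasEigenvalue_iff_mem_spectrum]
  exact Module.End.hasEigenvalue_of_hasEigenvector
    ⟨Module.End.mem_eigenspace_iff.2
      (by simpa [Matrix.toLinAlgEquiv'_apply, Matrix.toLin'_apply] using h), hv⟩

/-- if `[[G₁,G₂C],[0,A]] + `[[G₂D],[B]]·[K₁,K₂]` is Hurwitz and `G₁` has only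
purely imaginary eigenvalues, then the pair `(K₁, G₁)` is observable (Hautus test). -/
theorem stmt_6 {n m p s : ℕ}
    (G₁ : Matrix (Fin s) (Fin s) ℂ) (G₂ : Matrix (Fin s) (Fin p) ℂ)
    (A : Matrix (Fin n) (Fin n) ℂ) (B : Matrix (Fin n) (Fin m) ℂ)
    (C : Matrix (Fin p) (Fin n) ℂ) (D : Matrix (Fin p) (Fin m) ℂ)
    (K₁ : Matrix (Fin m) (Fin s) ℂ) (K₂ : Matrix (Fin m) (Fin n) ℂ)
    (hG₁ : ∀ μ ∈ spectrum ℂ G₁, μ.re = 0)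
    (hHur : Hurwitz (Matrix.fromBlocks G₁ (G₂ * C) 0 A
      + Matrix.fromBlocks (G₂ * D * K₁) (G₂ * D * K₂) (B * K₁) (B * K₂))) :
    ∀ (μ : ℂ) (φ : Fin s → ℂ), φ ≠ 0 → G₁.mulVec φ = μ • φ → K₁.mulVec φ ≠ 0 := by
  intro μ φ hφ hG hK
  have hμ0 : μ.re = 0 := hG₁ μ (mem_spectrum_of_mulVec_eq _ _ _ hφ hG)
  set M := Matrix.fromBlocks G₁ (G₂ * C) 0 A
      + Matrix.fromBlocks (G₂ * D * K₁) (G₂ * D * K₂) (B * K₁) (B * K₂) with hM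
  have hψ : (Sum.elim φ (0 : Fin n → ℂ)) ≠ 0 := by
    intro h
    apply hφ
    funext i
    have := congrFun h (Sum.inl i)
    simpa using this
  have hmul : M.mulVec (Sum.elim φ 0) = μ • Sum.elim φ 0 := by
    rw [hM, Matrix.add_mulVec, Matrix.fromBlocks_mulVec, Matrix.fromBlocks_mulVec]
    have h1 : (G₂ * D * K₁).mulVec φ = 0 := by
      rw [← Matrix.mulVec_mulVec, hK, Matrix.mulVec_zero]
    have h2 : (B * K₁).mulVec φ = 0 := by
      rw [← Matrix.mulVec_mulVec, hK, Matrix.mulVec_zero]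
    funext i
    cases i with
    | inl i =>
      simp [h1, hG]
    | inr i =>
      simp [h2]
  have := hHur μ (mem_spectrum_of_mulVec_eq M μ _ hψ hmul)
  rw [hμ0] at this
  exact lt_irrefl 0 this
end

section
/- Let α, β, γ ∈ ℝ with α, β > 0 and γ ≥ 0, and let (η_n) be a sequence of positive reals with η_n → ∞. For each n, let λ_n ∈ ℂ be a root of λ² - (βη_n + γ)λ - αη_n = 0 satisfying λ_n ≠ -α/β and such that λ_n is the root given by λ_n = ((βη_n+γ) - √((βη_n+γ)² + 4αη_n))/2 (the smaller root). Then λ_n → -α/β as n → ∞. -/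
open Filter

lemma key_eq (a b g e : ℝ) (ha : 0 < a) (hb : 0 < b) (hg : 0 ≤ g) (he : 0 < e) :
    ((b * e + g) - Real.sqrt ((b * e + g) ^ 2 + 4 * a * e)) / 2
      = -(2 * a) / (b + g / e + Real.sqrt ((b + g / e) ^ 2 + 4 * a / e)) := by
  set S := Real.sqrt ((b + g / e) ^ 2 + 4 * a / e) with hSdef
  have hX : (0:ℝ) ≤ (b + g / e) ^ 2 + 4 * a / e := by positivity
  have hS0 : 0 ≤ S := Real.sqrt_nonneg _
  have hS2 : S ^ 2 = (b + g / e) ^ 2 + 4 * a / e := Real.sq_sqrt hX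
  have hT : Real.sqrt ((b * e + g) ^ 2 + 4 * a * e) = e * S := by
    have : (b * e + g) ^ 2 + 4 * a * e = e ^ 2 * ((b + g / e) ^ 2 + 4 * a / e) := by
      field_simp
    rw [this, Real.sqrt_mul (sq_nonneg e), Real.sqrt_sq he.le]
  have hD : 0 < b + g / e + S := by positivity
  rw [hT]
  rw [div_eq_div_iff two_ne_zero hD.ne']
  have h1 : (b * e + g - e * S) * (b + g / e + S) = (b*e+g)^2/e - e * S^2 := by
    field_simp; ring
  rw [h1, hS2]
  field_simp
  ring

lemma real_tendsto (a b g : ℝ) (ha : 0 < a) (hb : 0 < b) (hg : 0 ≤ g)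
    (η : ℕ → ℝ) (hηpos : ∀ n, 0 < η n) (hη : Tendsto η atTop atTop) :
    Tendsto (fun n => ((b * η n + g) - Real.sqrt ((b * η n + g) ^ 2 + 4 * a * η n)) / 2)
      atTop (nhds (-(a / b))) := by
  have heq : (fun n => ((b * η n + g) - Real.sqrt ((b * η n + g) ^ 2 + 4 * a * η n)) / 2)
      = fun n => -(2 * a) / (b + g / η n + Real.sqrt ((b + g / η n) ^ 2 + 4 * a / η n)) := by
    funext n
    exact key_eq a b g (η n) ha hb hg (hηpos n)
  rw [heq]
  have h1 : Tendsto (fun n => g / η n) atTop (nhds 0) :=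
    Tendsto.div_atTop tendsto_const_nhds hη
  have h2 : Tendsto (fun n => 4 * a / η n) atTop (nhds 0) :=
    Tendsto.div_atTop tendsto_const_nhds hη
  have hd : Tendsto (fun n => b + g / η n + Real.sqrt ((b + g / η n) ^ 2 + 4 * a / η n))
      atTop (nhds (2 * b)) := by
    have hb1 : Tendsto (fun n => b + g / η n) atTop (nhds b) := by
      have := tendsto_const_nhds (x := b) (f := atTop (α := ℕ)) |>.add h1
      simpa using this
    have hs : Tendsto (fun n => Real.sqrt ((b + g / η n) ^ 2 + 4 * a / η n)) atTop
        (nhds b) := by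
      have : Tendsto (fun n => (b + g / η n) ^ 2 + 4 * a / η n) atTop (nhds (b ^ 2)) := by
        have := (hb1.pow 2).add h2
        simpa using this
      have := this.sqrt
      rwa [Real.sqrt_sq hb.le] at this
    have := hb1.add hs
    convert this using 1
    ring
  have hfin := (tendsto_const_nhds (x := -(2 * a)) (f := atTop (α := ℕ))).div hd
      (by positivity)
  convert hfin using 2
  · rfl
  · rw [neg_div, mul_div_mul_left _ _ two_ne_zero]

/-- the branch of roots `λ_n` of `λ² - (βη_n+γ)λ - αη_n = 0` given by the
smaller root formula, with `λ_n ≠ -α/β` and `η_n → ∞`, converges to `-α/β`. -/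
theorem stmt_15 (α β γ : ℝ) (hα : 0 < α) (hβ : 0 < β) (hγ : 0 ≤ γ)
    (η : ℕ → ℝ) (hηpos : ∀ n, 0 < η n) (hη : Tendsto η atTop atTop)
    (l : ℕ → ℂ)
    (hroot : ∀ n, (l n) ^ 2 - ((β * η n + γ : ℝ) : ℂ) * l n - ((α * η n : ℝ) : ℂ) = 0)
    (hne : ∀ n, l n ≠ ((-(α / β) : ℝ) : ℂ))
    (hformula : ∀ n,
      l n = (((β * η n + γ) - Real.sqrt ((β * η n + γ) ^ 2 + 4 * α * η n)) / 2 : ℝ)) :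
    Tendsto l atTop (nhds ((-(α / β) : ℝ) : ℂ)) := by
  have hl : l = fun n =>
      ((((β * η n + γ) - Real.sqrt ((β * η n + γ) ^ 2 + 4 * α * η n)) / 2 : ℝ) : ℂ) :=
    funext hformula
  rw [hl]
  exact (Complex.continuous_ofReal.tendsto _).comp
    (real_tendsto α β γ hα hβ hγ η hηpos hη)
end
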